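/- Let F be a symmetric fourth-order tensor on ℝⁿ with multilinear form F⁴, let α ∈ ℝ, and define S⁴_α(x) = F⁴(x,x,x,x) + α‖x‖₂⁴. Then S⁴_α is convex on ℝⁿ if and only if 12 F⁴(x,x,y,y) + 8α⟨x,y⟩² + 4α‖x‖₂²‖y‖₂² ≥ 0 for all x,y ∈ ℝⁿ. -/

import Mathlib

/-- A fourth-order tensor is symmetric if its entries are invariant under any
permutation of the indices. -/
def Sym4 {n : ℕ} (F : Fin n → Fin n → Fin n → Fin n → ℝ) : Prop :=
  ∀ (σ : Equiv.Perm (Fin 4)) (v : Fin 4 → Fin n),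
    F (v (σ 0)) (v (σ 1)) (v (σ 2)) (v (σ 3)) = F (v 0) (v 1) (v 2) (v 3)

/-- The multilinear form associated to a fourth-order tensor. -/
def mform4 {n : ℕ} (F : Fin n → Fin n → Fin n → Fin n → ℝ)
    (x y z t : EuclideanSpace ℝ (Fin n)) : ℝ :=
  ∑ i, ∑ j, ∑ k, ∑ l, F i j k l * x i * y j * z k * t l

/-- The Frobenius norm `‖F‖₂` of a fourth-order tensor. -/
noncomputable def frobNorm4 {n : ℕ} (F : Fin n → Fin n → Fin n → Fin n → ℝ) : ℝ :=
  Real.sqrt (∑ i, ∑ j, ∑ k, ∑ l, (F i j k l) ^ 2)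

variable {n : ℕ} {F : Fin n → Fin n → Fin n → Fin n → ℝ}

lemma hsw12 (hF : Sym4 F) (i j k l : Fin n) : F j i k l = F i j k l := by
  have := hF (Equiv.swap 0 1) ![i,j,k,l]
  simpa [Equiv.swap_apply_of_ne_of_ne] using this

lemma hsw23 (hF : Sym4 F) (i j k l : Fin n) : F i k j l = F i j k l := by
  have := hF (Equiv.swap 1 2) ![i,j,k,l]
  simpa [Equiv.swap_apply_of_ne_of_ne] using this

lemma hsw34 (hF : Sym4 F) (i j k l : Fin n) : F i j l k = F i j k l := by
  have := hF (Equiv.swap 2 3) ![i,j,k,l]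
  simpa [Equiv.swap_apply_of_ne_of_ne] using this

lemma mf_sw12 (hF : Sym4 F) (a b c d : EuclideanSpace ℝ (Fin n)) :
    mform4 F b a c d = mform4 F a b c d := by
  unfold mform4
  rw [Finset.sum_comm]
  refine Finset.sum_congr rfl fun i _ => Finset.sum_congr rfl fun j _ =>
    Finset.sum_congr rfl fun k _ => Finset.sum_congr rfl fun l _ => ?_
  rw [hsw12 hF]; ring

lemma mf_sw23 (hF : Sym4 F) (a b c d : EuclideanSpace ℝ (Fin n)) :
    mform4 F a c b d = mform4 F a b c d := by
  unfold mform4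
  refine Finset.sum_congr rfl fun i _ => ?_
  rw [Finset.sum_comm]
  refine Finset.sum_congr rfl fun j _ => Finset.sum_congr rfl fun k _ =>
    Finset.sum_congr rfl fun l _ => ?_
  rw [hsw23 hF]; ring

lemma mf_sw34 (hF : Sym4 F) (a b c d : EuclideanSpace ℝ (Fin n)) :
    mform4 F a b d c = mform4 F a b c d := by
  unfold mform4
  refine Finset.sum_congr rfl fun i _ => Finset.sum_congr rfl fun j _ => ?_
  rw [Finset.sum_comm]
  refine Finset.sum_congr rfl fun k _ => Finset.sum_congr rfl fun l _ => ?_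
  rw [hsw34 hF]; ring

lemma mf_as1 (t : ℝ) (x d b c e : EuclideanSpace ℝ (Fin n)) :
    mform4 F (x + t • d) b c e = mform4 F x b c e + t * mform4 F d b c e := by
  simp only [mform4, Finset.mul_sum, ← Finset.sum_add_distrib]
  refine Finset.sum_congr rfl fun i _ => Finset.sum_congr rfl fun j _ =>
    Finset.sum_congr rfl fun k _ => Finset.sum_congr rfl fun l _ => ?_
  simp only [PiLp.add_apply, PiLp.smul_apply, smul_eq_mul]
  ring

lemma mf_as2 (t : ℝ) (x d b c e : EuclideanSpace ℝ (Fin n)) :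
    mform4 F b (x + t • d) c e = mform4 F b x c e + t * mform4 F b d c e := by
  simp only [mform4, Finset.mul_sum, ← Finset.sum_add_distrib]
  refine Finset.sum_congr rfl fun i _ => Finset.sum_congr rfl fun j _ =>
    Finset.sum_congr rfl fun k _ => Finset.sum_congr rfl fun l _ => ?_
  simp only [PiLp.add_apply, PiLp.smul_apply, smul_eq_mul]
  ring

lemma mf_as3 (t : ℝ) (x d b c e : EuclideanSpace ℝ (Fin n)) :
    mform4 F b c (x + t • d) e = mform4 F b c x e + t * mform4 F b c d e := by
  simp only [mform4, Finset.mul_sum, ← Finset.sum_add_distrib]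
  refine Finset.sum_congr rfl fun i _ => Finset.sum_congr rfl fun j _ =>
    Finset.sum_congr rfl fun k _ => Finset.sum_congr rfl fun l _ => ?_
  simp only [PiLp.add_apply, PiLp.smul_apply, smul_eq_mul]
  ring

lemma mf_as4 (t : ℝ) (x d b c e : EuclideanSpace ℝ (Fin n)) :
    mform4 F b c e (x + t • d) = mform4 F b c e x + t * mform4 F b c e d := by
  simp only [mform4, Finset.mul_sum, ← Finset.sum_add_distrib]
  refine Finset.sum_congr rfl fun i _ => Finset.sum_congr rfl fun j _ =>
    Finset.sum_congr rfl fun k _ => Finset.sum_congr rfl fun l _ => ?_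
  simp only [PiLp.add_apply, PiLp.smul_apply, smul_eq_mul]
  ring

lemma norm_sq_expand (t : ℝ) (x d : EuclideanSpace ℝ (Fin n)) :
    ‖x + t • d‖ ^ 2 = ‖x‖ ^ 2 + 2 * t * (inner ℝ x d : ℝ) + t ^ 2 * ‖d‖ ^ 2 := by
  rw [norm_add_sq_real, real_inner_smul_right, norm_smul]
  simp [Real.norm_eq_abs, mul_pow, sq_abs]
  ring

lemma mf_expand (hF : Sym4 F) (t : ℝ) (x d : EuclideanSpace ℝ (Fin n)) :
    mform4 F (x + t • d) (x + t • d) (x + t • d) (x + t • d) =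
      mform4 F x x x x + 4 * t * mform4 F x x x d + 6 * t ^ 2 * mform4 F x x d d
        + 4 * t ^ 3 * mform4 F x d d d + t ^ 4 * mform4 F d d d d := by
  simp only [mf_as1, mf_as2, mf_as3, mf_as4]
  have e1 : mform4 F x x d x = mform4 F x x x d := mf_sw34 hF x x x d
  have e2 : mform4 F x d x x = mform4 F x x x d := by
    rw [mf_sw23 hF x x d x, e1]
  have e3 : mform4 F d x x x = mform4 F x x x d := by
    rw [mf_sw12 hF x d x x, e2]
  have f1 : mform4 F x d x d = mform4 F x x d d := mf_sw23 hF x x d d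
  have f2 : mform4 F d x x d = mform4 F x x d d := by rw [mf_sw12 hF x d x d, f1]
  have f3 : mform4 F x d d x = mform4 F x x d d := by rw [mf_sw34 hF x d x d, f1]
  have f4 : mform4 F d x d x = mform4 F x x d d := by rw [mf_sw12 hF x d d x, f3]
  have f5 : mform4 F d d x x = mform4 F x x d d := by rw [mf_sw23 hF d x d x, f4]
  have g1 : mform4 F d x d d = mform4 F x d d d := mf_sw12 hF x d d d
  have g2 : mform4 F d d x d = mform4 F x d d d := by rw [mf_sw23 hF d x d d, g1]
  have g3 : mform4 F d d d x = mform4 F x d d d := by rw [mf_sw34 hF d d x d, g2]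
  rw [e1, e2, e3, f1, f2, f3, f4, f5, g1, g2, g3]
  ring

lemma mf_expand2 (hF : Sym4 F) (t : ℝ) (x d : EuclideanSpace ℝ (Fin n)) :
    mform4 F (x + t • d) (x + t • d) d d =
      mform4 F x x d d + 2 * t * mform4 F x d d d + t ^ 2 * mform4 F d d d d := by
  simp only [mf_as1, mf_as2]
  rw [mf_sw12 hF x d d d]
  ring

lemma quartic_hasDerivAt (A B C D E t : ℝ) :
    HasDerivAt (fun s : ℝ => A + B * s + C * s ^ 2 + D * s ^ 3 + E * s ^ 4)
      (B + 2 * C * t + 3 * D * t ^ 2 + 4 * E * t ^ 3) t := by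
  have h : HasDerivAt (fun s : ℝ => A + B * s + C * s ^ 2 + D * s ^ 3 + E * s ^ 4)
      (0 + (B * 1) + C * (2 * t ^ 1) + D * (3 * t ^ 2) + E * (4 * t ^ 3)) t := by
    exact (((((hasDerivAt_const t A).add ((hasDerivAt_id t).const_mul B)).add
      ((hasDerivAt_pow 2 t).const_mul C)).add
      ((hasDerivAt_pow 3 t).const_mul D)).add
      ((hasDerivAt_pow 4 t).const_mul E))
  convert h using 1
  ring

lemma cubic_hasDerivAt (B C D E t : ℝ) :
    HasDerivAt (fun s : ℝ => B + 2 * C * s + 3 * D * s ^ 2 + 4 * E * s ^ 3)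
      (2 * C + 6 * D * t + 12 * E * t ^ 2) t := by
  have h : HasDerivAt (fun s : ℝ => B + 2 * C * s + 3 * D * s ^ 2 + 4 * E * s ^ 3)
      (0 + ((2 * C) * 1) + (3 * D) * (2 * t ^ 1) + (4 * E) * (3 * t ^ 2)) t := by
    exact ((((hasDerivAt_const t B).add ((hasDerivAt_id t).const_mul (2 * C))).add
      ((hasDerivAt_pow 2 t).const_mul (3 * D))).add
      ((hasDerivAt_pow 3 t).const_mul (4 * E)))
  convert h using 1
  ring

lemma convexOn_quartic (A B C D E : ℝ)
    (h : ∀ t : ℝ, 0 ≤ 2 * C + 6 * D * t + 12 * E * t ^ 2) :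
    ConvexOn ℝ Set.univ (fun s : ℝ => A + B * s + C * s ^ 2 + D * s ^ 3 + E * s ^ 4) := by
  have hd : deriv (fun s : ℝ => A + B * s + C * s ^ 2 + D * s ^ 3 + E * s ^ 4)
      = fun s => B + 2 * C * s + 3 * D * s ^ 2 + 4 * E * s ^ 3 := by
    funext s; exact (quartic_hasDerivAt A B C D E s).deriv
  refine convexOn_univ_of_deriv2_nonneg
    (fun t => (quartic_hasDerivAt A B C D E t).differentiableAt) ?_ ?_
  · rw [hd]; exact fun t => (cubic_hasDerivAt B C D E t).differentiableAt
  · intro t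
    have : deriv^[2] (fun s : ℝ => A + B * s + C * s ^ 2 + D * s ^ 3 + E * s ^ 4) t
        = 2 * C + 6 * D * t + 12 * E * t ^ 2 := by
      show deriv (deriv _) t = _
      rw [hd]
      exact (cubic_hasDerivAt B C D E t).deriv
    rw [this]; exact h t

lemma S_expand (hF : Sym4 F) (α t : ℝ) (x d : EuclideanSpace ℝ (Fin n)) :
    mform4 F (x + t • d) (x + t • d) (x + t • d) (x + t • d) + α * ‖x + t • d‖ ^ 4 =
      (mform4 F x x x x + α * ‖x‖ ^ 4)
      + (4 * mform4 F x x x d + 4 * α * ‖x‖ ^ 2 * (inner ℝ x d : ℝ)) * t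
      + (6 * mform4 F x x d d + 4 * α * (inner ℝ x d : ℝ) ^ 2 + 2 * α * ‖x‖ ^ 2 * ‖d‖ ^ 2) * t ^ 2
      + (4 * mform4 F x d d d + 4 * α * (inner ℝ x d : ℝ) * ‖d‖ ^ 2) * t ^ 3
      + (mform4 F d d d d + α * ‖d‖ ^ 4) * t ^ 4 := by
  rw [mf_expand hF]
  have h4 : ‖x + t • d‖ ^ 4 = (‖x + t • d‖ ^ 2) ^ 2 := by ring
  have hx4 : ‖x‖ ^ 4 = (‖x‖ ^ 2) ^ 2 := by ring
  have hd4 : ‖d‖ ^ 4 = (‖d‖ ^ 2) ^ 2 := by ring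
  rw [h4, norm_sq_expand, hx4, hd4]; ring

lemma nonneg_of_poly (C E : ℝ) (h : ∀ t : ℝ, 0 ≤ C * t ^ 2 + E * t ^ 4) : 0 ≤ C := by
  by_contra hC
  push_neg at hC
  rcases le_or_gt E 0 with hE | hE
  · have := h 1; nlinarith
  · set s := -C / (2 * E) with hsdef
    have hs0 : 0 < s := div_pos (by linarith) (by linarith)
    have ht := h (Real.sqrt s)
    have hsq : Real.sqrt s ^ 2 = s := Real.sq_sqrt hs0.le
    have h4 : Real.sqrt s ^ 4 = s ^ 2 := by
      rw [show (4 : ℕ) = 2 * 2 from rfl, pow_mul, hsq]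
    rw [hsq, h4] at ht
    have hid : C * s + E * s ^ 2 = s * (C / 2) := by
      rw [hsdef]; field_simp; ring
    rw [hid] at ht
    nlinarith


/-- `S⁴_α(x) = F⁴(x,x,x,x) + α‖x‖₂⁴` is convex if and only if
`12 F⁴(x,x,y,y) + 8α⟨x,y⟩² + 4α‖x‖₂²‖y‖₂² ≥ 0` for all `x, y`. -/
theorem stmt_11 {n : ℕ} (F : Fin n → Fin n → Fin n → Fin n → ℝ) (hF : Sym4 F)
    (α : ℝ) :
    ConvexOn ℝ Set.univ
        (fun x : EuclideanSpace ℝ (Fin n) => mform4 F x x x x + α * ‖x‖ ^ 4) ↔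
      ∀ x y : EuclideanSpace ℝ (Fin n),
        0 ≤ 12 * mform4 F x x y y + 8 * α * (inner ℝ x y : ℝ) ^ 2 +
            4 * α * ‖x‖ ^ 2 * ‖y‖ ^ 2 := by
  constructor
  · intro hc x y
    set C := 6 * mform4 F x x y y + 4 * α * (inner ℝ x y : ℝ) ^ 2 + 2 * α * ‖x‖ ^ 2 * ‖y‖ ^ 2
      with hCdef
    set E := mform4 F y y y y + α * ‖y‖ ^ 4 with hEdef
    have hkey : ∀ t : ℝ, 0 ≤ C * t ^ 2 + E * t ^ 4 := by
      intro t
      have hmid : (1/2 : ℝ) • (x + t • y) + (1/2 : ℝ) • (x + (-t) • y) = x := by module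
      have h := hc.2 (Set.mem_univ (x + t • y)) (Set.mem_univ (x + (-t) • y))
        (by norm_num : (0:ℝ) ≤ 1/2) (by norm_num : (0:ℝ) ≤ 1/2) (by norm_num)
      rw [hmid] at h
      simp only [smul_eq_mul] at h
      have e1 := S_expand hF α t x y
      have e2 := S_expand hF α (-t) x y
      have e0 : mform4 F x x x x + α * ‖x‖ ^ 4 =
          mform4 F x x x x + α * ‖x‖ ^ 4 := rfl
      rw [e1, e2] at h
      rw [hCdef, hEdef]
      nlinarith [h]
    have hC := nonneg_of_poly C E hkey
    rw [hCdef] at hC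
    linarith
  · intro h
    refine ⟨convex_univ, ?_⟩
    intro x _ y _ a b ha hb hab
    simp only [smul_eq_mul]
    set d := y - x with hddef
    set A := mform4 F x x x x + α * ‖x‖ ^ 4 with hA
    set B := 4 * mform4 F x x x d + 4 * α * ‖x‖ ^ 2 * (inner ℝ x d : ℝ) with hB
    set C := 6 * mform4 F x x d d + 4 * α * (inner ℝ x d : ℝ) ^ 2 + 2 * α * ‖x‖ ^ 2 * ‖d‖ ^ 2
      with hC
    set D := 4 * mform4 F x d d d + 4 * α * (inner ℝ x d : ℝ) * ‖d‖ ^ 2 with hD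
    set E := mform4 F d d d d + α * ‖d‖ ^ 4 with hE
    have hq : ∀ t : ℝ, 0 ≤ 2 * C + 6 * D * t + 12 * E * t ^ 2 := by
      intro t
      have hyp := h (x + t • d) d
      have hin : (inner ℝ (x + t • d) d : ℝ) = (inner ℝ x d : ℝ) + t * ‖d‖ ^ 2 := by
        rw [inner_add_left, real_inner_smul_left, real_inner_self_eq_norm_sq]
      have heq : 12 * mform4 F (x + t • d) (x + t • d) d d
          + 8 * α * (inner ℝ (x + t • d) d : ℝ) ^ 2
          + 4 * α * ‖x + t • d‖ ^ 2 * ‖d‖ ^ 2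
          = 2 * C + 6 * D * t + 12 * E * t ^ 2 := by
        rw [mf_expand2 hF, hin, norm_sq_expand, hC, hD, hE]
        have hd4 : ‖d‖ ^ 4 = (‖d‖ ^ 2) ^ 2 := by ring
        rw [hd4]; ring
      linarith [hyp, heq.symm.le, heq.le]
    have hconv := convexOn_quartic A B C D E hq
    have key := hconv.2 (Set.mem_univ (0:ℝ)) (Set.mem_univ (1:ℝ)) ha hb hab
    simp only [smul_eq_mul, mul_zero, mul_one, add_zero, zero_pow, one_pow,
      ne_eq, OfNat.ofNat_ne_zero, not_false_eq_true] at key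
    -- key : A + B*b + C*b^2 + D*b^3 + E*b^4 ≤ a*A + b*(A+B+C+D+E) roughly
    have hxy : a • x + b • y = x + b • d := by
      rw [hddef]
      have : a = 1 - b := by linarith
      rw [this]; module
    have h1 : x + (1:ℝ) • d = y := by rw [hddef]; module
    have eb := S_expand hF α b x d
    have e1 := S_expand hF α 1 x d
    rw [h1] at e1
    rw [hxy, eb, e1]
    rw [← hA, ← hB, ← hC, ← hD, ← hE] at *
    nlinarith [key]
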